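/- Let n ≥ 2 and let V be a nonzero finite-dimensional complex vector space carrying an irreducible representation ρ of the symmetric group S_n. If the restriction of ρ to the subgroup S_{n-2} (permutations fixing the last two points) is irreducible, then either ρ(g) is the identity map of V for every g ∈ S_n (so ρ is the trivial representation), or ρ(g) equals sign(g) times the identity map of V for every g ∈ S_n (so ρ is the sign representation). -/

import Mathlib

/-- The subgroup of `Equiv.Perm (Fin n)` consisting of permutations fixing every
point with (0-based) index `≥ k`, i.e. the copy of `S_k` inside `S_n`. -/
def permFixFrom (n k : ℕ) : Subgroup (Equiv.Perm (Fin n)) where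
  carrier := {σ | ∀ i : Fin n, k ≤ (i : ℕ) → σ i = i}
  one_mem' := fun _ _ => rfl
  mul_mem' := by
    intro a b ha hb i hi
    have hb' := hb i hi
    have ha' := ha i hi
    simp only [Set.mem_setOf_eq] at *
    rw [Equiv.Perm.mul_apply, hb', ha']
  inv_mem' := by
    intro a ha i hi
    have h := ha i hi
    exact a.injective (by rw [← Equiv.Perm.mul_apply, mul_inv_cancel, Equiv.Perm.one_apply, h])

/-- A representation `ρ : G →* (V →ₗ[ℂ] V)` is irreducible if `V` is nonzero and the only
`G`-invariant subspaces are `⊥` and `⊤`. -/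
def IsIrreducibleRep {G V : Type*} [Group G] [AddCommGroup V] [Module ℂ V]
    (ρ : G →* (V →ₗ[ℂ] V)) : Prop :=
  Nontrivial V ∧ ∀ p : Submodule ℂ V, (∀ g : G, ∀ v ∈ p, ρ g v ∈ p) → p = ⊥ ∨ p = ⊤

/-- If an irreducible representation of `S_n` (`n ≥ 2`) on a nonzero finite-dimensional
complex vector space restricts irreducibly to `S_{n-2}`, then it is the trivial
representation or the sign representation. -/
theorem stmt_1 (n : ℕ) (hn : 2 ≤ n) (V : Type*) [AddCommGroup V] [Module ℂ V]
    [FiniteDimensional ℂ V] (ρ : Equiv.Perm (Fin n) →* (V →ₗ[ℂ] V))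
    (hρ : IsIrreducibleRep ρ)
    (hres : IsIrreducibleRep (ρ.comp (permFixFrom n (n - 2)).subtype)) :
    (∀ g : Equiv.Perm (Fin n), ρ g = LinearMap.id) ∨
      (∀ g : Equiv.Perm (Fin n),
        ρ g = (((Equiv.Perm.sign g : ℤ) : ℂ)) • (LinearMap.id : V →ₗ[ℂ] V)) := by
  obtain ⟨hV, hirr⟩ := hρ
  have ha : n - 2 < n := by omega
  have hb : n - 1 < n := by omega
  set a : Fin n := ⟨n - 2, ha⟩
  set b : Fin n := ⟨n - 1, hb⟩
  have hab : a ≠ b := by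
    simp only [a, b, Fin.mk.injEq, ne_eq]
    omega
  set τ : Equiv.Perm (Fin n) := Equiv.swap a b with hτ
  -- τ commutes with every element of the subgroup
  have hcomm : ∀ σ ∈ permFixFrom n (n - 2), σ * τ = τ * σ := by
    intro σ hσ
    have hσa : σ a = a := hσ a (le_refl _)
    have hσb : σ b = b := hσ b (by simp only [b]; omega)
    ext i
    simp only [Equiv.Perm.mul_apply, hτ]
    rcases eq_or_ne i a with rfl | hia
    · rw [Equiv.swap_apply_left, hσb, hσa, Equiv.swap_apply_left]
    rcases eq_or_ne i b with rfl | hib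
    · rw [Equiv.swap_apply_right, hσa, hσb, Equiv.swap_apply_right]
    · rw [Equiv.swap_apply_of_ne_of_ne hia hib,
        Equiv.swap_apply_of_ne_of_ne
          (fun h => hia (σ.injective (by rw [h, hσa])))
          (fun h => hib (σ.injective (by rw [h, hσb])))]
  -- ρ τ has an eigenvalue c
  haveI := hV
  obtain ⟨c, hc⟩ := Module.End.exists_eigenvalue (ρ τ : Module.End ℂ V)
  -- the eigenspace is invariant under the subgroup, hence everything is eigen
  set p : Submodule ℂ V := Module.End.eigenspace (ρ τ : Module.End ℂ V) c with hp
  have hpinv : ∀ g : (permFixFrom n (n - 2)), ∀ v ∈ p,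
      (ρ.comp (permFixFrom n (n - 2)).subtype) g v ∈ p := by
    rintro ⟨σ, hσ⟩ v hv
    rw [hp, Module.End.mem_eigenspace_iff] at hv ⊢
    have : ρ τ ((ρ σ) v) = ρ σ ((ρ τ) v) := by
      rw [← Module.End.mul_apply, ← map_mul, ← hcomm σ hσ, map_mul, Module.End.mul_apply]
    simpa [this, hv] using (ρ σ).map_smul c v
  have hptop : p = ⊤ := (hres.2 p hpinv).resolve_left hc
  have ρτeq : ρ τ = c • (1 : V →ₗ[ℂ] V) := by
    ext v
    have hv : v ∈ p := hptop ▸ Submodule.mem_top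
    rw [hp, Module.End.mem_eigenspace_iff] at hv
    simpa using hv
  -- c ^ 2 = 1
  have hc2 : c * c = 1 := by
    have h1 : ρ τ * ρ τ = 1 := by
      rw [← map_mul, hτ, Equiv.swap_mul_self, map_one]
    rw [ρτeq] at h1
    obtain ⟨v, hv0⟩ := exists_ne (0 : V)
    have := congrArg (fun f : V →ₗ[ℂ] V => f v) h1
    simp only [Module.End.mul_apply, LinearMap.smul_apply, Module.End.one_apply,
      smul_smul] at this
    have : (c * c - 1) • v = 0 := by rw [sub_smul, this, one_smul, sub_self]
    rcases smul_eq_zero.mp this with h | h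
    · linear_combination h
    · exact absurd h hv0
  -- every transposition maps to c • 1
  have hswap : ∀ x y : Fin n, x ≠ y → ρ (Equiv.swap x y) = c • (1 : V →ₗ[ℂ] V) := by
    intro x y hxy
    obtain ⟨σ, hσ⟩ := isConj_iff.mp (Equiv.Perm.isConj_swap hab hxy)
    calc ρ (Equiv.swap x y) = ρ σ * ρ τ * ρ σ⁻¹ := by rw [← map_mul, ← map_mul, hσ]
      _ = c • (ρ σ * ρ σ⁻¹) := by rw [ρτeq]; rw [mul_smul_comm, smul_mul_assoc, mul_one]
      _ = c • (1 : V →ₗ[ℂ] V) := by rw [← map_mul, mul_inv_cancel, map_one]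
  rcases mul_self_eq_one_iff.mp hc2 with rfl | rfl
  · left
    intro g
    refine Equiv.Perm.swap_induction_on g (by simp [Module.End.one_eq_id]) ?_
    intro f x y hxy ih
    rw [map_mul, hswap x y hxy, ih, one_smul]
    simp
  · right
    intro g
    refine Equiv.Perm.swap_induction_on g (by simp [Module.End.one_eq_id]) ?_
    intro f x y hxy ih
    rw [map_mul, hswap x y hxy, ih, Equiv.Perm.sign_mul,
      Equiv.Perm.sign_swap hxy]
    simp [smul_smul]
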